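/- arXiv:2404.16703 — 5 statements merged into one kernel-verified Lean document; each statement's English description precedes it below -/
import Mathlib

section
/- Let n ≥ 1 and let (q,p) ∈ (Fin n → pH) × pH satisfy ∑ₐ normSq qₐ + normSq p = 1 and normSq(p−1) ≠ 0. Then re((p−1)⁻¹·(p+1)) = −∑ₐ normSq((p−1)⁻¹·qₐ). In other words, the paraquaternionic Cayley transform C(q,p) = ((p−1)⁻¹·q, (p−1)⁻¹·(p+1)) maps the pseudo-sphere {∑ₐ normSq qₐ + normSq p = 1} (away from the set where normSq(p−1) = 0) into the hypersurface Σ = {(q',p') : re p' = −∑ₐ normSq q'ₐ}. -/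
open scoped Quaternion

/-- The split quaternions (para-quaternions). -/
local notation "pH" => ℍ[ℝ, 1, 1]

/-- The norm form `normSq p = p * star p` (a real scalar) of signature (2,2). -/
noncomputable def normSq (p : ℍ[ℝ, 1, 1]) : ℝ := (p * star p).re

/-- The inverse of a split quaternion `a` with `normSq a ≠ 0`:
`a⁻¹ = (normSq a)⁻¹ • star a`, a two-sided inverse. -/
noncomputable def pinv (a : ℍ[ℝ, 1, 1]) : ℍ[ℝ, 1, 1] := (normSq a)⁻¹ • star a

lemma normSq_mul (a b : pH) : normSq (a * b) = normSq a * normSq b := by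
  simp only [normSq, QuaternionAlgebra.re_mul, QuaternionAlgebra.re_star,
    QuaternionAlgebra.imI_star, QuaternionAlgebra.imJ_star, QuaternionAlgebra.imK_star,
    QuaternionAlgebra.imI_mul, QuaternionAlgebra.imJ_mul, QuaternionAlgebra.imK_mul]
  ring

lemma normSq_star (a : pH) : normSq (star a) = normSq a := by
  simp only [normSq, star_star, QuaternionAlgebra.re_mul, QuaternionAlgebra.re_star,
    QuaternionAlgebra.imI_star, QuaternionAlgebra.imJ_star, QuaternionAlgebra.imK_star]
  ring

/-- The paraquaternionic Cayley transform
`C(q,p) = ((p−1)⁻¹·q, (p−1)⁻¹·(p+1))` maps the pseudo-sphere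
`∑ₐ normSq qₐ + normSq p = 1` (away from `normSq (p−1) = 0`) into the hypersurface
`Σ = {(q',p') : re p' = −∑ₐ normSq q'ₐ}`. -/
theorem cayley_maps_sphere_to_Sigma (n : ℕ) (hn : 1 ≤ n)
    (q : Fin n → pH) (p : pH)
    (hS : ∑ a, normSq (q a) + normSq p = 1)
    (h1 : normSq (p - 1) ≠ 0) :
    (pinv (p - 1) * (p + 1)).re = -∑ a, normSq (pinv (p - 1) * q a) := by
  have hsum : ∑ a, normSq (q a) = 1 - normSq p := by linarith
  have hE : normSq (p - 1) =
      (p.re - 1) * (p.re - 1) + -(p.imI * p.imI) + -(p.imJ * p.imJ) + p.imK * p.imK := by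
    simp only [normSq, QuaternionAlgebra.re_mul, QuaternionAlgebra.re_star,
      QuaternionAlgebra.imI_star, QuaternionAlgebra.imJ_star, QuaternionAlgebra.imK_star,
      QuaternionAlgebra.re_sub, QuaternionAlgebra.imI_sub, QuaternionAlgebra.imJ_sub,
      QuaternionAlgebra.imK_sub, QuaternionAlgebra.re_one, QuaternionAlgebra.imI_one,
      QuaternionAlgebra.imJ_one, QuaternionAlgebra.imK_one]
    ring
  have hE0 : (p.re - 1) * (p.re - 1) + -(p.imI * p.imI) + -(p.imJ * p.imJ) + p.imK * p.imK ≠ 0 :=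
    hE ▸ h1
  have hNpinv : normSq (pinv (p - 1)) = (normSq (p - 1))⁻¹ := by
    simp only [pinv, normSq, QuaternionAlgebra.star_smul, smul_mul_assoc, mul_smul_comm,
      QuaternionAlgebra.re_smul, star_star, smul_eq_mul]
    rw [show (star (p-1) * (p-1)).re = normSq (p-1) by
      simp only [normSq, QuaternionAlgebra.re_mul, QuaternionAlgebra.re_star,
        QuaternionAlgebra.imI_star, QuaternionAlgebra.imJ_star, QuaternionAlgebra.imK_star]; ring]
    field_simp
    rw [hE]
    field_simp
    rw [show ((p - 1) * star (p - 1)).re = normSq (p - 1) from rfl, hE,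
      div_eq_div_iff (pow_ne_zero 2 hE0) hE0]
    ring
  have hR : ∀ a, normSq (pinv (p - 1) * q a) = (normSq (p - 1))⁻¹ * normSq (q a) := by
    intro a; rw [normSq_mul, hNpinv]
  rw [Finset.sum_congr rfl (fun a _ => hR a), ← Finset.mul_sum, hsum]
  have hL : (pinv (p - 1) * (p + 1)).re = (normSq (p - 1))⁻¹ * (normSq p - 1) := by
    simp only [pinv, smul_mul_assoc, QuaternionAlgebra.re_smul, normSq,
      QuaternionAlgebra.re_mul, QuaternionAlgebra.re_star, QuaternionAlgebra.imI_star,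
      QuaternionAlgebra.imJ_star, QuaternionAlgebra.imK_star, QuaternionAlgebra.re_sub,
      QuaternionAlgebra.re_add, QuaternionAlgebra.imI_sub, QuaternionAlgebra.imI_add,
      QuaternionAlgebra.imJ_sub, QuaternionAlgebra.imJ_add, QuaternionAlgebra.imK_sub,
      QuaternionAlgebra.imK_add, QuaternionAlgebra.re_one, QuaternionAlgebra.imI_one,
      QuaternionAlgebra.imJ_one, QuaternionAlgebra.imK_one, smul_eq_mul]
    ring
  rw [hL]; ring
end

section
/- Let p ∈ pH with normSq(p−1) ≠ 0 and let q : Fin n → pH. Set q'ₐ = (p−1)⁻¹·qₐ and p' = (p−1)⁻¹·(p+1). Then p'−1 = 2·(p−1)⁻¹, so normSq(p'−1) = 4/normSq(p−1) ≠ 0, and the inverse paraquaternionic Cayley transform recovers the original point: 2·(p'−1)⁻¹·q'ₐ = qₐ for all a, and (p'−1)⁻¹·(p'+1) = p. -/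
open scoped Quaternion

/-- The split quaternions (para-quaternions). -/
local notation "pH" => ℍ[ℝ, 1, 1]

lemma coe_smul_one (r : ℝ) : ((r : ℝ) : pH) = r • (1 : pH) := by ext <;> simp

lemma star_mul_self_re (a : pH) : (star a * a).re = normSq a := by
  simp [normSq, QuaternionAlgebra.re_mul]

lemma mul_pinv (a : pH) (h : normSq a ≠ 0) : a * pinv a = 1 := by
  rw [pinv, mul_smul_comm, QuaternionAlgebra.mul_star_eq_coe,
    show (a * star a).re = normSq a from rfl, coe_smul_one,
    smul_smul, inv_mul_cancel₀ h, one_smul]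

lemma pinv_mul (a : pH) (h : normSq a ≠ 0) : pinv a * a = 1 := by
  rw [pinv, smul_mul_assoc, QuaternionAlgebra.star_mul_eq_coe, star_mul_self_re,
    coe_smul_one, smul_smul, inv_mul_cancel₀ h, one_smul]

lemma normSq_smul (r : ℝ) (a : pH) : normSq (r • a) = r^2 * normSq a := by
  simp only [normSq, QuaternionAlgebra.star_smul, smul_mul_assoc, mul_smul_comm, smul_smul,
    QuaternionAlgebra.re_smul, smul_eq_mul, star_trivial]
  ring

lemma two_mul_eq_smul (x : pH) : 2 * x = (2:ℝ) • x := by rw [two_mul, two_smul]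
lemma mul_two_eq (x : pH) : x * 2 = 2 * x := by rw [mul_two, two_mul]

/-- The inverse paraquaternionic Cayley transform
`(q',p') ↦ (2·(p'−1)⁻¹·q', (p'−1)⁻¹·(p'+1))` inverts the Cayley transform
`C(q,p) = ((p−1)⁻¹·q, (p−1)⁻¹·(p+1))`: with `q'ₐ = (p−1)⁻¹·qₐ` and
`p' = (p−1)⁻¹·(p+1)` one has `p'−1 = 2·(p−1)⁻¹`, hence
`normSq (p'−1) = 4 / normSq (p−1) ≠ 0`, and
`2·(p'−1)⁻¹·q'ₐ = qₐ`, `(p'−1)⁻¹·(p'+1) = p`. -/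
theorem cayley_inverse_recovers (n : ℕ) (q : Fin n → pH) (p : pH)
    (h : normSq (p - 1) ≠ 0)
    (q' : Fin n → pH) (p' : pH)
    (hq' : ∀ a, q' a = pinv (p - 1) * q a)
    (hp' : p' = pinv (p - 1) * (p + 1)) :
    p' - 1 = 2 * pinv (p - 1) ∧
    normSq (p' - 1) = 4 / normSq (p - 1) ∧
    normSq (p' - 1) ≠ 0 ∧
    (∀ a, 2 * pinv (p' - 1) * q' a = q a) ∧
    pinv (p' - 1) * (p' + 1) = p := by
  have hA : (p - 1) * pinv (p - 1) = 1 := mul_pinv _ h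
  have hA' : pinv (p - 1) * (p - 1) = 1 := pinv_mul _ h
  have h1 : p' - 1 = 2 * pinv (p - 1) := by
    calc p' - 1 = pinv (p-1) * (p+1) - pinv (p-1) * (p-1) := by rw [hp', hA']
    _ = pinv (p-1) * ((p+1) - (p-1)) := by simp only [mul_sub, mul_add, mul_one]
    _ = pinv (p-1) * 2 := by norm_num
    _ = 2 * pinv (p-1) := mul_two_eq _
  have h2 : normSq (p' - 1) = 4 / normSq (p - 1) := by
    rw [h1, two_mul_eq_smul, pinv, smul_smul, normSq_smul, normSq_star]
    field_simp
    ring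
  have h3 : normSq (p' - 1) ≠ 0 := by
    rw [h2]; exact div_ne_zero (by norm_num) h
  have key : 2 * pinv (p' - 1) = p - 1 := by
    calc 2 * pinv (p'-1) = pinv (p'-1) * 2 * 1 := by rw [mul_one, mul_two_eq]
    _ = pinv (p'-1) * 2 * (pinv (p-1) * (p-1)) := by rw [hA']
    _ = pinv (p'-1) * (2 * pinv (p-1)) * (p-1) := by rw [mul_assoc, mul_assoc, mul_assoc]
    _ = pinv (p'-1) * (p'-1) * (p-1) := by rw [← h1]
    _ = 1 * (p-1) := by rw [pinv_mul _ h3]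
    _ = p - 1 := one_mul _
  refine ⟨h1, h2, h3, ?_, ?_⟩
  · intro a
    rw [hq', key, ← mul_assoc, hA, one_mul]
  · have h2ne : normSq (2 : pH) ≠ 0 := by
      have e : (2:pH) = ⟨2,0,0,0⟩ := by ext <;> rfl
      rw [normSq, e]
      norm_num [QuaternionAlgebra.re_mul]
    have big : 2 * (pinv (p'-1) * (p'+1)) = 2 * p := by
      calc 2 * (pinv (p'-1) * (p'+1)) = (2 * pinv (p'-1)) * (p'+1) := (mul_assoc _ _ _).symm
      _ = (p-1) * (pinv (p-1) * (p+1) + 1) := by rw [key, hp']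
      _ = (p-1) * (pinv (p-1) * (p+1)) + (p-1) := by rw [mul_add, mul_one]
      _ = (p-1) * pinv (p-1) * (p+1) + (p-1) := by rw [mul_assoc]
      _ = (p+1) + (p-1) := by rw [hA, one_mul]
      _ = 2 * p := by rw [two_mul]; abel
    calc pinv (p'-1) * (p'+1) = 1 * (pinv (p'-1) * (p'+1)) := (one_mul _).symm
    _ = pinv 2 * (2 * (pinv (p'-1) * (p'+1))) := by
        rw [show (1:pH) = pinv 2 * 2 from (pinv_mul _ h2ne).symm, mul_assoc]
    _ = pinv 2 * (2 * p) := by rw [big]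
    _ = p := by rw [← mul_assoc, pinv_mul _ h2ne, one_mul]
end

section
/- Let n ≥ 1 and let (q',p') ∈ (Fin n → pH) × pH satisfy re p' = −∑ₐ normSq q'ₐ and normSq(p'−1) ≠ 0. Set qₐ = 2·(p'−1)⁻¹·q'ₐ and p = (p'−1)⁻¹·(p'+1). Then ∑ₐ normSq qₐ + normSq p = 1; that is, the inverse paraquaternionic Cayley transform maps the hypersurface Σ = {(q',p') : re p' = −∑ₐ normSq q'ₐ} (away from the set where normSq(p'−1) = 0) into the pseudo-sphere {∑ₐ normSq qₐ + normSq p = 1}. -/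
open scoped Quaternion

/-- The split quaternions (para-quaternions). -/
local notation "pH" => ℍ[ℝ, 1, 1]

lemma normSq_eq (a : pH) : normSq a = a.re^2 - a.imI^2 - a.imJ^2 + a.imK^2 := by
  simp [normSq, QuaternionAlgebra.re_mul]
  ring

lemma normSq_two : normSq (2 : pH) = 4 := by
  rw [show (2 : pH) = 1 + 1 from (one_add_one_eq_two).symm, normSq_eq]
  simp
  norm_num

lemma normSq_pinv (a : pH) (h : normSq a ≠ 0) : normSq (pinv a) = (normSq a)⁻¹ := by
  have : normSq (pinv a) = ((normSq a)⁻¹)^2 * normSq a := by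
    simp only [pinv, normSq_eq, QuaternionAlgebra.re_smul, QuaternionAlgebra.imI_smul,
      QuaternionAlgebra.imJ_smul, QuaternionAlgebra.imK_smul, QuaternionAlgebra.re_star,
      QuaternionAlgebra.imI_star, QuaternionAlgebra.imJ_star, QuaternionAlgebra.imK_star,
      smul_eq_mul]
    ring
  rw [this]
  field_simp

/-- The inverse paraquaternionic Cayley transform
`(q',p') ↦ (2·(p'−1)⁻¹·q', (p'−1)⁻¹·(p'+1))` maps the hypersurface
`Σ = {(q',p') : re p' = −∑ₐ normSq q'ₐ}` (away from `normSq (p'−1) = 0`) into the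
pseudo-sphere `∑ₐ normSq qₐ + normSq p = 1`. -/
theorem inverse_cayley_maps_Sigma_to_sphere (n : ℕ) (hn : 1 ≤ n)
    (q' : Fin n → pH) (p' : pH)
    (hSig : p'.re = -∑ a, normSq (q' a))
    (h1 : normSq (p' - 1) ≠ 0) :
    ∑ a, normSq (2 * pinv (p' - 1) * q' a) + normSq (pinv (p' - 1) * (p' + 1)) = 1 := by
  have hterm : ∀ a, normSq (2 * pinv (p' - 1) * q' a)
      = 4 * (normSq (p' - 1))⁻¹ * normSq (q' a) := by
    intro a
    rw [normSq_mul, normSq_mul, normSq_two, normSq_pinv _ h1]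
  rw [Finset.sum_congr rfl fun a _ => hterm a, ← Finset.mul_sum,
    normSq_mul, normSq_pinv _ h1]
  have hS : ∑ a, normSq (q' a) = -p'.re := by rw [hSig]; ring
  rw [hS]
  have key : 4 * (-p'.re) + normSq (p' + 1) = normSq (p' - 1) := by
    simp only [normSq_eq, QuaternionAlgebra.re_add, QuaternionAlgebra.imI_add,
      QuaternionAlgebra.imJ_add, QuaternionAlgebra.imK_add, QuaternionAlgebra.re_sub,
      QuaternionAlgebra.imI_sub, QuaternionAlgebra.imJ_sub, QuaternionAlgebra.imK_sub,
      QuaternionAlgebra.re_one, QuaternionAlgebra.imI_one, QuaternionAlgebra.imJ_one,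
      QuaternionAlgebra.imK_one]
    ring
  have h2 : -(4 * p'.re) + normSq (p' + 1) ≠ 0 := by
    intro h; exact h1 (by linarith [key])
  rw [← key]
  field_simp
end

section
/- Let n ≥ 1, let p, P ∈ pH, let q, Q : Fin n → pH, and assume ∑ₐ qₐ·star qₐ + p·star p = 1 in pH. Let u ∈ pH be a two-sided inverse of p−1 (i.e., u·(p−1) = (p−1)·u = 1) and set v = star u, so that v is a two-sided inverse of star p − 1. Then the following identity holds: −u·P·u + v·(star P)·v + ∑ₐ ( u·(Qₐ − P·u·qₐ)·(star qₐ)·v − u·qₐ·(star Qₐ − (star qₐ)·v·(star P))·v ) = u·( ∑ₐ(Qₐ·star qₐ − qₐ·star Qₐ) + P·star p − p·star P )·v. (This is the algebraic identity underlying the computation that the paraquaternionic Cayley transform pulls back the standard contact form of the pseudo-sphere to a conformal multiple of the standard form of the paraquaternionic Heisenberg group, equation (15) of the paper.) -/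
open scoped Quaternion

/-- The split quaternions (para-quaternions). -/
local notation "pH" => ℍ[ℝ, 1, 1]

/-- The algebraic identity underlying the computation that the paraquaternionic Cayley
transform pulls back the standard contact form of the pseudo-sphere to a conformal
multiple of the standard form of the paraquaternionic Heisenberg group (equation (15)
of the paper).  Here `P` and `Qₐ` play the role of the differentials `dp` and `dqₐ`,
and the hypothesis `∑ₐ qₐ·star qₐ + p·star p = 1` says `(q,p)` lies on the
pseudo-sphere. -/
theorem cayley_pullback_identity (n : ℕ) (hn : 1 ≤ n)
    (p P : pH) (q Q : Fin n → pH)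
    (hs : ∑ a, q a * star (q a) + p * star p = 1)
    (u : pH) (hu1 : u * (p - 1) = 1) (hu2 : (p - 1) * u = 1) :
    (star u * (star p - 1) = 1 ∧ (star p - 1) * star u = 1) ∧
    (-(u * P * u) + star u * star P * star u
      + ∑ a, (u * (Q a - P * u * q a) * star (q a) * star u
              - u * q a * (star (Q a) - star (q a) * star u * star P) * star u)
      = u * ((∑ a, (Q a * star (q a) - q a * star (Q a)))
              + P * star p - p * star P) * star u) := by
  -- basic inverse relations
  have hup : u * p = 1 + u := by
    rw [mul_sub, mul_one, sub_eq_iff_eq_add] at hu1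
    exact hu1
  have hv1 : star u * (star p - 1) = 1 := by
    have := congrArg star hu2
    simpa [star_mul, star_sub] using this
  have hv2 : (star p - 1) * star u = 1 := by
    have := congrArg star hu1
    simpa [star_mul, star_sub] using this
  have hpv : star p * star u = 1 + star u := by
    rw [sub_mul, one_mul, sub_eq_iff_eq_add] at hv2
    exact hv2
  refine ⟨⟨hv1, hv2⟩, ?_⟩
  have hS : ∑ a, q a * star (q a) = 1 - p * star p := eq_sub_of_add_eq hs
  have h1 : u * (∑ a, q a * star (q a)) * star u = -(1 + u + star u) := by
    rw [hS]
    calc u * (1 - p * star p) * star u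
        = u * star u - (u * p) * (star p * star u) := by noncomm_ring
      _ = u * star u - (1 + u) * (1 + star u) := by rw [hup, hpv]
      _ = -(1 + u + star u) := by noncomm_ring
  have hsum : ∑ a, (u * (Q a - P * u * q a) * star (q a) * star u
              - u * q a * (star (Q a) - star (q a) * star u * star P) * star u)
      = u * (∑ a, (Q a * star (q a) - q a * star (Q a))) * star u
        - (u * P) * (u * (∑ a, q a * star (q a)) * star u)
        + (u * (∑ a, q a * star (q a)) * star u) * (star P * star u) := by
    simp only [Finset.mul_sum, Finset.sum_mul, ← Finset.sum_sub_distrib,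
      ← Finset.sum_add_distrib]
    refine Finset.sum_congr rfl fun a _ => ?_
    noncomm_ring
  rw [hsum, h1]
  have e1 : u * ((∑ a, (Q a * star (q a) - q a * star (Q a))) + P * star p - p * star P) * star u
      = u * (∑ a, (Q a * star (q a) - q a * star (Q a))) * star u
        + (u * P) * (star p * star u) - (u * p) * (star P * star u) := by
    noncomm_ring
  rw [e1, hpv, hup]
  noncomm_ring
end

section
/- Let V be a real vector space carrying a para-hypercomplex structure I₁, I₂, I₃, and let Υ be the Casimir operator on bilinear forms, Υ(B)(X,Y) = −B(I₁X,I₁Y) − B(I₂X,I₂Y) + B(I₃X,I₃Y). Then Υ satisfies the quadratic identity Υ(Υ(B)) = 2·Υ(B) + 3·B for every bilinear form B on V; equivalently, Υ² − 2Υ − 3·id = 0 on the space of bilinear forms, so the only possible eigenvalues of Υ are 3 and −1. -/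
/-- Let `V` carry a para-hypercomplex structure `I₁, I₂, I₃` (with `I₁² = I₂² = id`,
`I₃² = −id`, `I₁I₂ = −I₂I₁ = I₃`) and let `Υ` be the Casimir operator on bilinear
forms, `Υ(B)(X,Y) = −B(I₁X,I₁Y) − B(I₂X,I₂Y) + B(I₃X,I₃Y)`.  Then
`Υ² = 2Υ + 3·id`, so the only possible eigenvalues of `Υ` are `3` and `−1`. -/
theorem casimir_quadratic_identity (V : Type*) [AddCommGroup V] [Module ℝ V]
    (I₁ I₂ I₃ : V →ₗ[ℝ] V)
    (h11 : I₁ ∘ₗ I₁ = LinearMap.id) (h22 : I₂ ∘ₗ I₂ = LinearMap.id)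
    (h33 : I₃ ∘ₗ I₃ = -LinearMap.id)
    (h12 : I₁ ∘ₗ I₂ = I₃) (h21 : I₂ ∘ₗ I₁ = -I₃)
    (Υ : (V →ₗ[ℝ] V →ₗ[ℝ] ℝ) → (V →ₗ[ℝ] V →ₗ[ℝ] ℝ))
    (hΥ : ∀ (B : V →ₗ[ℝ] V →ₗ[ℝ] ℝ) (X Y : V),
      Υ B X Y = -B (I₁ X) (I₁ Y) - B (I₂ X) (I₂ Y) + B (I₃ X) (I₃ Y))
    (B : V →ₗ[ℝ] V →ₗ[ℝ] ℝ) :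
    Υ (Υ B) = (2 : ℝ) • Υ B + (3 : ℝ) • B := by
  have p11 : ∀ x, I₁ (I₁ x) = x := fun x => congrArg (· x) h11
  have p22 : ∀ x, I₂ (I₂ x) = x := fun x => congrArg (· x) h22
  have p33 : ∀ x, I₃ (I₃ x) = -x := fun x => congrArg (· x) h33
  have p12 : ∀ x, I₁ (I₂ x) = I₃ x := fun x => congrArg (· x) h12
  have p21 : ∀ x, I₂ (I₁ x) = -(I₃ x) := fun x => congrArg (· x) h21
  have p31 : ∀ x, I₃ (I₁ x) = -(I₂ x) := by
    intro x
    rw [← p12 (I₁ x), p21, map_neg, ← p12 x, p11]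
  have p32 : ∀ x, I₃ (I₂ x) = I₁ x := by
    intro x
    rw [← p12 (I₂ x), p22]
  have p13 : ∀ x, I₁ (I₃ x) = I₂ x := by
    intro x
    rw [← p12 x, p11]
  have p23 : ∀ x, I₂ (I₃ x) = -(I₁ x) := by
    intro x
    rw [← p12 x, p21, p32]
  apply LinearMap.ext; intro X; apply LinearMap.ext; intro Y
  simp only [LinearMap.add_apply, LinearMap.smul_apply, smul_eq_mul]
  rw [hΥ (Υ B) X Y, hΥ B (I₁ X) (I₁ Y), hΥ B (I₂ X) (I₂ Y), hΥ B (I₃ X) (I₃ Y),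
    hΥ B X Y]
  simp only [p11, p22, p33, p12, p21, p31, p32, p13, p23, map_neg,
    LinearMap.neg_apply]
  ring
end
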